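/- Let (ℱ, 𝒮) be a digraph-source sequence of size ℓ with ℱ = (G_1,...,G_ℓ), and let B ⊆ ⋃_i V(G_i). Then the maximum size of a set of D-paths with respect to (ℱ, 𝒮) and B equals the minimum order of a D-cut, i.e., equals min over B′ ⊆ B of (|B \ B′| + Σ_{i=1}^{ℓ} x_i(B′)), where x_i(B′) is the minimum size of an (S_i, B′)-separator in G_i. -/

import Mathlib

/-- A (directed) path given as a nonempty list of pairwise-distinct vertices
with consecutive pairs being edges of the digraph `G`. -/
def IsPathList {V : Type*} (G : V → V → Prop) (p : List V) : Prop :=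
  p ≠ [] ∧ p.Nodup ∧ p.Chain' G

/-- The first vertex of the list `p` belongs to `A`. -/
def FirstIn {V : Type*} (p : List V) (A : Set V) : Prop := ∃ a ∈ A, p.head? = some a

/-- The last vertex of the list `p` belongs to `A`. -/
def LastIn {V : Type*} (p : List V) (A : Set V) : Prop := ∃ a ∈ A, p.getLast? = some a

/-- `X` is an `(A,B)`-separator in `G`: every path of `G` starting in `A` and
ending in `B` meets `X`. -/
def IsSeparator {V : Type*} (G : V → V → Prop) (A B X : Set V) : Prop :=
  ∀ p : List V, IsPathList G p → FirstIn p A → LastIn p B → ∃ v ∈ p, v ∈ X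

/-- Two lists of vertices share no vertex. -/
def ListsDisjoint {V : Type*} (p q : List V) : Prop := ∀ v, v ∈ p → v ∉ q

/-- An `(ℱ,𝒮)`-respecting system of paths, encoded as a finite set of pairs
`(i, p)` where `p` is a path of `G i` starting in `S i`, and paths assigned to
the same index (i.e. in the same part of the defining partition) are pairwise
vertex-disjoint. -/
def RespectingSys {V : Type*} {ℓ : ℕ} (G : Fin ℓ → V → V → Prop) (S : Fin ℓ → Set V)
    (P : Finset (Fin ℓ × List V)) : Prop :=
  (∀ q ∈ P, IsPathList (G q.1) q.2 ∧ FirstIn q.2 (S q.1)) ∧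
  (∀ q ∈ P, ∀ q' ∈ P, q ≠ q' → q.1 = q'.1 → ListsDisjoint q.2 q'.2)

/-- A set of D-paths w.r.t. `(ℱ,𝒮)` and `B` : a respecting system whose paths
have pairwise distinct last vertices, all lying in `B`. -/
def DPathSys {V : Type*} {ℓ : ℕ} (G : Fin ℓ → V → V → Prop) (S : Fin ℓ → Set V)
    (B : Set V) (P : Finset (Fin ℓ × List V)) : Prop :=
  RespectingSys G S P ∧ (∀ q ∈ P, LastIn q.2 B) ∧
  (∀ q ∈ P, ∀ q' ∈ P, q ≠ q' → q.2.getLast? ≠ q'.2.getLast?)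

section Helpers
open List
variable {V : Type*}

lemma IsPathList.mono {R R' : V → V → Prop} (h : ∀ a b, R a b → R' a b) {p : List V}
    (hp : IsPathList R p) : IsPathList R' p := ⟨hp.1, hp.2.1, hp.2.2.imp h⟩

lemma chain'_glue {R : V → V → Prop} {l : List V} {a : V} {m : List V}
    (h1 : Chain' R (l ++ [a])) (h2 : Chain' R (a :: m)) : Chain' R (l ++ a :: m) := by
  unfold List.Chain' at h1 h2 ⊢
  rw [show l ++ a :: m = (l ++ [a]) ++ m by simp, isChain_append]
  rw [List.isChain_cons] at h2
  exact ⟨h1, h2.2, by simpa using h2.1⟩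

lemma head?_mid (l₁ : List V) (a : V) (l₂ : List V) :
    (l₁ ++ a :: l₂).head? = (l₁ ++ [a]).head? := by cases l₁ <;> simp

lemma getLast?_mid (l₁ : List V) (a : V) (l₂ : List V) :
    (l₁ ++ a :: l₂).getLast? = (a :: l₂).getLast? := by
  rw [getLast?_append]
  cases h : (a :: l₂).getLast? with
  | none => simp [getLast?_eq_getLast (l := a :: l₂) (by simp)] at h
  | some x => simp

lemma not_nodup_split {p : List V} (h : ¬ p.Nodup) :
    ∃ (l₁ : List V) (a : V) (l₂ l₃ : List V), p = l₁ ++ a :: (l₂ ++ a :: l₃) := by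
  induction p with
  | nil => simp at h
  | cons a t ih =>
    by_cases ha : a ∈ t
    · obtain ⟨s, r, rfl⟩ := List.append_of_mem ha
      exact ⟨[], a, s, r, by simp⟩
    · have ht : ¬ t.Nodup := fun hn => h (List.nodup_cons.2 ⟨ha, hn⟩)
      obtain ⟨l₁, b, l₂, l₃, rfl⟩ := ih ht
      exact ⟨a :: l₁, b, l₂, l₃, by simp⟩

lemma mem_of_getLast?' {l : List V} {x : V} (h : l.getLast? = some x) : x ∈ l := by
  obtain ⟨h', rfl⟩ := List.mem_getLast?_eq_getLast (show x ∈ l.getLast? from by rw [h]; rfl)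
  exact List.getLast_mem h'

lemma mem_of_head?' {l : List V} {x : V} (h : l.head? = some x) : x ∈ l := by
  cases l with
  | nil => simp at h
  | cons a t => simp at h; simp [h]

lemma walk_to_path {R : V → V → Prop} (p : List V) (hne : p ≠ []) (hc : p.Chain' R) :
    ∃ q : List V, IsPathList R q ∧ q.head? = p.head? ∧ q.getLast? = p.getLast? ∧
      ∀ v ∈ q, v ∈ p := by
  suffices H : ∀ (n : ℕ) (p : List V), p.length = n → p ≠ [] → p.Chain' R →
      ∃ q : List V, IsPathList R q ∧ q.head? = p.head? ∧ q.getLast? = p.getLast? ∧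
      ∀ v ∈ q, v ∈ p from H _ p rfl hne hc
  intro n
  induction n using Nat.strong_induction_on with
  | _ n ih =>
  intro p hn hne hc
  by_cases hd : p.Nodup
  · exact ⟨p, ⟨hne, hd, hc⟩, rfl, rfl, fun v hv => hv⟩
  · obtain ⟨l₁, a, l₂, l₃, rfl⟩ := not_nodup_split hd
    have hlen : (l₁ ++ a :: l₃).length < n := by subst hn; simp
    have hne' : l₁ ++ a :: l₃ ≠ [] := by simp
    have hc' : (l₁ ++ a :: l₃).Chain' R := by
      apply chain'_glue
      · exact hc.prefix ⟨l₂ ++ a :: l₃, by simp⟩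
      · exact hc.suffix ⟨l₁ ++ a :: l₂, by simp⟩
    obtain ⟨q, hq, hh, hl, hm⟩ := ih _ hlen _ rfl hne' hc' 
    refine ⟨q, hq, ?_, ?_, ?_⟩
    · rw [hh, head?_mid l₁ a l₃, head?_mid l₁ a (l₂ ++ a :: l₃)]
    · rw [hl, getLast?_mid l₁ a l₃, getLast?_mid l₁ a (l₂ ++ a :: l₃),
        show a :: (l₂ ++ a :: l₃) = (a :: l₂) ++ a :: l₃ from by simp,
        getLast?_mid (a :: l₂) a l₃]
    · intro v hv
      have := hm v hv
      simp at this ⊢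
      tauto

lemma path_prefix {R : V → V → Prop} {l₁ l₂ : List V} {a : V}
    (h : IsPathList R (l₁ ++ a :: l₂)) : IsPathList R (l₁ ++ [a]) := by
  have hpre : (l₁ ++ [a]) <+: (l₁ ++ a :: l₂) := ⟨l₂, by simp⟩
  exact ⟨by simp, h.2.1.sublist hpre.sublist, h.2.2.prefix hpre⟩

lemma path_suffix {R : V → V → Prop} {l₁ l₂ : List V} {a : V}
    (h : IsPathList R (l₁ ++ a :: l₂)) : IsPathList R (a :: l₂) := by
  have hsuf : (a :: l₂) <:+ (l₁ ++ a :: l₂) := ⟨l₁, rfl⟩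
  exact ⟨by simp, h.2.1.sublist hsuf.sublist, h.2.2.suffix hsuf⟩

lemma last_unique {p : List V} (hp : p.Nodup) {l₁ : List V} {a : V} {l₂ : List V}
    (hd : p = l₁ ++ a :: l₂) {x : V} (hx : p.getLast? = some x) (hmem : x ∈ l₁ ++ [a]) :
    l₂ = [] ∧ x = a := by
  cases l₂ with
  | nil =>
    subst hd
    rw [getLast?_mid] at hx
    simp at hx
    exact ⟨rfl, hx.symm⟩
  | cons b l₂' =>
    exfalso
    subst hd
    rw [getLast?_mid] at hx
    have hxm : x ∈ b :: l₂' := by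
      rw [List.getLast?_cons_cons] at hx
      exact mem_of_getLast?' hx
    have hdisj : List.Disjoint (l₁ ++ [a]) (b :: l₂') := by
      have : (l₁ ++ a :: b :: l₂') = (l₁ ++ [a]) ++ (b :: l₂') := by simp
      rw [this] at hp
      exact List.disjoint_of_nodup_append hp
    exact hdisj hmem hxm

lemma head_unique {p : List V} (hp : p.Nodup) {l₁ : List V} {a : V} {l₂ : List V}
    (hd : p = l₁ ++ a :: l₂) {x : V} (hx : p.head? = some x) (hmem : x ∈ a :: l₂) :
    l₁ = [] ∧ x = a := by
  cases l₁ with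
  | nil => subst hd; simp at hx; exact ⟨rfl, hx.symm⟩
  | cons c l₁' =>
    exfalso
    subst hd
    simp at hx
    have hdisj : List.Disjoint (c :: l₁') (a :: l₂) := by
      have hp' : ((c :: l₁') ++ (a :: l₂)).Nodup := hp
      exact List.disjoint_of_nodup_append hp'
    exact hdisj (by simp [hx]) hmem

lemma card_le_ncard_of_injOn {α : Type*} [Fintype V] {P : Finset α} {X : Set V} (f : α → V)
    (hm : ∀ a ∈ P, f a ∈ X) (hi : Set.InjOn f P) : P.card ≤ X.ncard := by
  rw [Set.ncard_eq_toFinset_card X (Set.toFinite X)]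
  exact Finset.card_le_card_of_injOn f (fun a ha => (Set.Finite.mem_toFinset _).2 (hm a ha)) hi

end Helpers


section Menger
open List
variable {V : Type*}

lemma eq_cons_of_head? {l : List V} {a : V} (h : l.head? = some a) : l = a :: l.tail := by
  cases l with
  | nil => simp at h
  | cons b t => simp at h; simp [h]

lemma chain'_erase_or [DecidableEq V] {E : Finset (V × V)} {u₀ v₀ : V} :
    ∀ (p : List V), Chain' (fun u v => (u, v) ∈ E) p →
    Chain' (fun u v => (u, v) ∈ E.erase (u₀, v₀)) p ∨ ∃ l₁ l₂, p = l₁ ++ u₀ :: v₀ :: l₂ := by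
  intro p
  induction p with
  | nil => intro _; left; exact List.isChain_nil
  | cons a t ih =>
    intro hc
    cases t with
    | nil => left; exact List.isChain_singleton _
    | cons b t' =>
      unfold List.Chain' at hc
      rw [List.isChain_cons_cons] at hc
      rcases ih hc.2 with h | ⟨l₁, l₂, hl⟩
      · by_cases he : (a, b) = (u₀, v₀)
        · obtain ⟨rfl, rfl⟩ := Prod.mk.injEq .. ▸ he
          exact Or.inr ⟨[], t', rfl⟩
        · left; unfold List.Chain'; rw [List.isChain_cons_cons]; exact ⟨Finset.mem_erase.2 ⟨he, hc.1⟩, h⟩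
      · right; exact ⟨a :: l₁, l₂, by simp [hl]⟩

theorem menger_core [Fintype V] [DecidableEq V] (E : Finset (V × V)) (A B : Set V) (k : ℕ)
    (hsep : ∀ X : Set V, IsSeparator (fun u v => (u, v) ∈ E) A B X → k ≤ X.ncard) :
    ∃ P : Finset (List V), P.card = k ∧
      (∀ p ∈ P, IsPathList (fun u v => (u, v) ∈ E) p ∧ FirstIn p A ∧ LastIn p B) ∧
      (∀ p ∈ P, ∀ q ∈ P, p ≠ q → ListsDisjoint p q) := by
  suffices H : ∀ (n : ℕ) (E : Finset (V × V)), E.card = n → ∀ (A B : Set V) (k : ℕ),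
      (∀ X : Set V, IsSeparator (fun u v => (u, v) ∈ E) A B X → k ≤ X.ncard) →
      ∃ P : Finset (List V), P.card = k ∧
        (∀ p ∈ P, IsPathList (fun u v => (u, v) ∈ E) p ∧ FirstIn p A ∧ LastIn p B) ∧
        (∀ p ∈ P, ∀ q ∈ P, p ≠ q → ListsDisjoint p q) from H _ E rfl A B k hsep
  clear hsep E A B k
  intro n
  induction n using Nat.strong_induction_on with
  | _ n ih =>
  intro E hE A B k hsep
  rcases E.eq_empty_or_nonempty with rfl | ⟨⟨u, v⟩, huv⟩
  · -- base case : E = ∅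
    have hAB : IsSeparator (fun u v => (u, v) ∈ (∅ : Finset (V × V))) A B (A ∩ B) := by
      intro p hp hf hl
      obtain ⟨a, haA, hha⟩ := hf
      obtain ⟨b, hbB, hlb⟩ := hl
      obtain ⟨x, rfl⟩ : ∃ x, p = [x] := by
        cases p with
        | nil => exact absurd rfl hp.1
        | cons x t =>
          cases t with
          | nil => exact ⟨x, rfl⟩
          | cons y t' => exact absurd (List.isChain_cons_cons.1 hp.2.2).1 (by simp)
      simp at hha hlb
      exact ⟨x, by simp, ⟨hha ▸ haA, hlb ▸ hbB⟩⟩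
    have hk := hsep _ hAB
    obtain ⟨t, htsub, htcard⟩ := Set.exists_subset_card_eq hk
    refine ⟨(t.toFinite.toFinset).image (fun v => [v]), ?_, ?_, ?_⟩
    · rw [Finset.card_image_of_injective _ (fun a b h => by injection h),
        ← Set.ncard_eq_toFinset_card _ t.toFinite, htcard]
    · intro p hp
      simp only [Finset.mem_image, Set.Finite.mem_toFinset] at hp
      obtain ⟨x, hx, rfl⟩ := hp
      have hxAB := htsub hx
      exact ⟨⟨by simp, by simp, List.isChain_singleton _⟩, ⟨x, hxAB.1, rfl⟩, ⟨x, hxAB.2, rfl⟩⟩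
    · intro p hp q hq hne w hwp hwq
      simp only [Finset.mem_image, Set.Finite.mem_toFinset] at hp hq
      obtain ⟨x, hx, rfl⟩ := hp
      obtain ⟨y, hy, rfl⟩ := hq
      simp at hwp hwq
      exact hne (by rw [hwp] at hwq; rw [hwq])
  · -- inductive step
    set E' := E.erase (u, v) with hE'
    have hcard' : E'.card < n := by rw [← hE]; exact Finset.card_erase_lt_of_mem huv
    have hmono : ∀ a b, (a, b) ∈ E' → (a, b) ∈ E := fun a b h => Finset.mem_of_mem_erase h
    by_cases huv_eq : u = v
    · -- loop edge: same paths
      subst huv_eq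
      have hsep' : ∀ X : Set V, IsSeparator (fun a b => (a, b) ∈ E') A B X → k ≤ X.ncard := by
        intro X hX
        refine hsep X ?_
        intro p hp hf hl
        have hc' : Chain' (fun a b => (a, b) ∈ E') p := by
          rcases chain'_erase_or p hp.2.2 with h | ⟨l₁, l₂, hl12⟩
          · exact h
          · exfalso
            have h1 : [u, u] <+ u :: u :: l₂ := by
              refine List.cons_sublist_cons.2 (List.cons_sublist_cons.2 (List.nil_sublist _))
            have h2 : u :: u :: l₂ <+ l₁ ++ u :: u :: l₂ := List.sublist_append_right _ _
            have := hp.2.1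
            rw [hl12] at this
            have := this.sublist (h1.trans h2)
            simp at this
        exact hX p ⟨hp.1, hp.2.1, hc'⟩ hf hl
      obtain ⟨P, h1, h2, h3⟩ := ih _ hcard' E' rfl A B k hsep'
      exact ⟨P, h1, fun p hp => ⟨IsPathList.mono hmono (h2 p hp).1, (h2 p hp).2⟩, h3⟩
    · by_cases hall : ∀ X : Set V, IsSeparator (fun a b => (a, b) ∈ E') A B X → k ≤ X.ncard
      · obtain ⟨P, h1, h2, h3⟩ := ih _ hcard' E' rfl A B k hall
        exact ⟨P, h1, fun p hp => ⟨IsPathList.mono hmono (h2 p hp).1, (h2 p hp).2⟩, h3⟩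
      · push_neg at hall
        obtain ⟨X, hXsep, hXlt⟩ := hall
        have hsep_ins : ∀ w : V, (w = u ∨ w = v) →
            IsSeparator (fun a b => (a, b) ∈ E) A B (insert w X) := by
          intro w hw p hp hf hl
          rcases chain'_erase_or p hp.2.2 with h | ⟨l₁, l₂, hl12⟩
          · obtain ⟨x, hxp, hxX⟩ := hXsep p ⟨hp.1, hp.2.1, h⟩ hf hl
            exact ⟨x, hxp, Set.mem_insert_of_mem _ hxX⟩
          · rcases hw with rfl | rfl
            · exact ⟨w, by rw [hl12]; simp, Set.mem_insert _ _⟩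
            · exact ⟨w, by rw [hl12]; simp, Set.mem_insert _ _⟩
        have hku : k ≤ (insert u X).ncard := hsep _ (hsep_ins u (Or.inl rfl))
        have hkv : k ≤ (insert v X).ncard := hsep _ (hsep_ins v (Or.inr rfl))
        have hinsu : (insert u X).ncard ≤ X.ncard + 1 := Set.ncard_insert_le _ _
        have hinsv : (insert v X).ncard ≤ X.ncard + 1 := Set.ncard_insert_le _ _
        have hunotX : u ∉ X := by
          intro hu; rw [Set.insert_eq_self.2 hu] at hku; omega
        have hvnotX : v ∉ X := by
          intro hv; rw [Set.insert_eq_self.2 hv] at hkv; omega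
        have hTcard : (insert u X).ncard = k := by
          rw [Set.ncard_insert_of_notMem hunotX]; omega
        have hT'card : (insert v X).ncard = k := by
          rw [Set.ncard_insert_of_notMem hvnotX]; omega
        -- A-side separation strength
        have hA_side : ∀ Y : Set V, IsSeparator (fun a b => (a, b) ∈ E') A (insert u X) Y →
            k ≤ Y.ncard := by
          intro Y hY
          refine hsep Y ?_
          intro p hp hf hl
          rcases chain'_erase_or p hp.2.2 with h | ⟨l₁, l₂, hl12⟩
          · obtain ⟨x, hxp, hxX⟩ := hXsep p ⟨hp.1, hp.2.1, h⟩ hf hl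
            obtain ⟨l₁, l₂, rfl⟩ := List.append_of_mem hxp
            have hq : IsPathList (fun a b => (a, b) ∈ E') (l₁ ++ [x]) :=
              path_prefix ⟨hp.1, hp.2.1, h⟩
            have hfq : FirstIn (l₁ ++ [x]) A := by
              obtain ⟨a, ha, hha⟩ := hf
              exact ⟨a, ha, by rw [← head?_mid l₁ x l₂]; exact hha⟩
            obtain ⟨y, hyq, hyY⟩ := hY (l₁ ++ [x]) hq hfq
              ⟨x, Set.mem_insert_of_mem _ hxX, by simp⟩
            exact ⟨y, by simp at hyq ⊢; tauto, hyY⟩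
          · subst hl12
            have hqE : IsPathList (fun a b => (a, b) ∈ E) (l₁ ++ [u]) :=
              path_prefix (l₂ := v :: l₂) hp
            have hqchain : Chain' (fun a b => (a, b) ∈ E') (l₁ ++ [u]) := by
              rcases chain'_erase_or _ hqE.2.2 with h | ⟨m₁, m₂, hm⟩
              · exact h
              · exfalso
                have := last_unique (x := u) hqE.2.1 hm (by simp) (by simp)
                simp at this
            have hfq : FirstIn (l₁ ++ [u]) A := by
              obtain ⟨a, ha, hha⟩ := hf
              exact ⟨a, ha, by rw [← head?_mid l₁ u (v :: l₂)]; exact hha⟩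
            obtain ⟨y, hyq, hyY⟩ := hY (l₁ ++ [u]) ⟨by simp, hqE.2.1, hqchain⟩ hfq
              ⟨u, Set.mem_insert _ _, by simp⟩
            exact ⟨y, by simp at hyq ⊢; tauto, hyY⟩
        -- B-side separation strength
        have hB_side : ∀ Y : Set V, IsSeparator (fun a b => (a, b) ∈ E') (insert v X) B Y →
            k ≤ Y.ncard := by
          intro Y hY
          refine hsep Y ?_
          intro p hp hf hl
          rcases chain'_erase_or p hp.2.2 with h | ⟨l₁, l₂, hl12⟩
          · obtain ⟨x, hxp, hxX⟩ := hXsep p ⟨hp.1, hp.2.1, h⟩ hf hl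
            obtain ⟨l₁, l₂, rfl⟩ := List.append_of_mem hxp
            have hq : IsPathList (fun a b => (a, b) ∈ E') (x :: l₂) :=
              path_suffix ⟨hp.1, hp.2.1, h⟩
            have hlq : LastIn (x :: l₂) B := by
              obtain ⟨b, hb, hlb⟩ := hl
              exact ⟨b, hb, by rw [← getLast?_mid l₁ x l₂]; exact hlb⟩
            obtain ⟨y, hyq, hyY⟩ := hY (x :: l₂) hq
              ⟨x, Set.mem_insert_of_mem _ hxX, rfl⟩ hlq
            exact ⟨y, by simp at hyq ⊢; tauto, hyY⟩
          · subst hl12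
            have hp2 : IsPathList (fun a b => (a, b) ∈ E) ((l₁ ++ [u]) ++ v :: l₂) := by
              simpa using hp
            have hqE : IsPathList (fun a b => (a, b) ∈ E) (v :: l₂) := path_suffix hp2
            have hqchain : Chain' (fun a b => (a, b) ∈ E') (v :: l₂) := by
              rcases chain'_erase_or _ hqE.2.2 with h | ⟨m₁, m₂, hm⟩
              · exact h
              · exfalso
                have := head_unique (x := v) hqE.2.1
                  (show v :: l₂ = (m₁ ++ [u]) ++ v :: m₂ by simpa using hm) (by simp) (by simp)
                simp at this
            have hlq : LastIn (v :: l₂) B := by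
              obtain ⟨b, hb, hlb⟩ := hl
              refine ⟨b, hb, ?_⟩
              rw [← getLast?_mid (l₁ ++ [u]) v l₂]
              simpa using hlb
            obtain ⟨y, hyq, hyY⟩ := hY (v :: l₂) ⟨by simp, hqE.2.1, hqchain⟩
              ⟨v, Set.mem_insert _ _, rfl⟩ hlq
            exact ⟨y, by simp at hyq ⊢; tauto, hyY⟩
        obtain ⟨PA, hPA_card, hPA_mem, hPA_disj⟩ := ih _ hcard' E' rfl A (insert u X) k hA_side
        obtain ⟨PB, hPB_card, hPB_mem, hPB_disj⟩ := ih _ hcard' E' rfl (insert v X) B k hB_side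
        -- endpoints of PA biject with insert u X, heads of PB with insert v X
        have hlastA : ∀ p ∈ PA, ∃ x, p.getLast? = some x ∧ x ∈ insert u X := by
          intro p hp
          obtain ⟨a, ha, hla⟩ := (hPA_mem p hp).2.2
          exact ⟨a, hla, ha⟩
        have hheadB : ∀ p ∈ PB, ∃ x, p.head? = some x ∧ x ∈ insert v X := by
          intro p hp
          obtain ⟨a, ha, hla⟩ := (hPB_mem p hp).2.1
          exact ⟨a, hla, ha⟩
        have hsurjA : ∀ x ∈ insert u X, ∃ p ∈ PA, p.getLast? = some x := by
          intro x hx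
          have hmaps : ∀ p ∈ PA, (fun p : List V => p.getLast?.getD u) p ∈
              (Set.toFinite (insert u X)).toFinset := by
            intro p hp
            obtain ⟨a, hla, ha⟩ := hlastA p hp
            rw [Set.Finite.mem_toFinset]
            simpa [hla] using ha
          have hinj : Set.InjOn (fun p : List V => p.getLast?.getD u) ↑PA := by
            intro p hp q hq hfeq
            obtain ⟨a, hla, _⟩ := hlastA p (Finset.mem_coe.1 hp)
            obtain ⟨b, hlb, _⟩ := hlastA q (Finset.mem_coe.1 hq)
            simp only [hla, hlb, Option.getD_some] at hfeq
            by_contra hne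
            exact hPA_disj p (Finset.mem_coe.1 hp) q (Finset.mem_coe.1 hq) hne a
              (mem_of_getLast?' hla) (mem_of_getLast?' (hfeq ▸ hlb))
          have himg : PA.image (fun p : List V => p.getLast?.getD u) =
              (Set.toFinite (insert u X)).toFinset := by
            apply Finset.eq_of_subset_of_card_le
            · intro y hy
              obtain ⟨p, hp, rfl⟩ := Finset.mem_image.1 hy
              exact hmaps p hp
            · rw [Finset.card_image_of_injOn hinj, hPA_card,
                ← Set.ncard_eq_toFinset_card _ (Set.toFinite _), hTcard]
          have hxin : x ∈ PA.image (fun p : List V => p.getLast?.getD u) := by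
            rw [himg, Set.Finite.mem_toFinset]; exact hx
          obtain ⟨p, hp, hfp⟩ := Finset.mem_image.1 hxin
          obtain ⟨a, hla, _⟩ := hlastA p hp
          refine ⟨p, hp, ?_⟩
          simp only [hla, Option.getD_some] at hfp
          rw [hla, hfp]
        have hsurjB : ∀ x ∈ insert v X, ∃ p ∈ PB, p.head? = some x := by
          intro x hx
          have hmaps : ∀ p ∈ PB, (fun p : List V => p.head?.getD u) p ∈
              (Set.toFinite (insert v X)).toFinset := by
            intro p hp
            obtain ⟨a, hla, ha⟩ := hheadB p hp
            rw [Set.Finite.mem_toFinset]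
            simpa [hla] using ha
          have hinj : Set.InjOn (fun p : List V => p.head?.getD u) ↑PB := by
            intro p hp q hq hfeq
            obtain ⟨a, hla, _⟩ := hheadB p (Finset.mem_coe.1 hp)
            obtain ⟨b, hlb, _⟩ := hheadB q (Finset.mem_coe.1 hq)
            simp only [hla, hlb, Option.getD_some] at hfeq
            by_contra hne
            exact hPB_disj p (Finset.mem_coe.1 hp) q (Finset.mem_coe.1 hq) hne a
              (mem_of_head?' hla) (mem_of_head?' (hfeq ▸ hlb))
          have himg : PB.image (fun p : List V => p.head?.getD u) =
              (Set.toFinite (insert v X)).toFinset := by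
            apply Finset.eq_of_subset_of_card_le
            · intro y hy
              obtain ⟨p, hp, rfl⟩ := Finset.mem_image.1 hy
              exact hmaps p hp
            · rw [Finset.card_image_of_injOn hinj, hPB_card,
                ← Set.ncard_eq_toFinset_card _ (Set.toFinite _), hT'card]
          have hxin : x ∈ PB.image (fun p : List V => p.head?.getD u) := by
            rw [himg, Set.Finite.mem_toFinset]; exact hx
          obtain ⟨p, hp, hfp⟩ := Finset.mem_image.1 hxin
          obtain ⟨a, hla, _⟩ := hheadB p hp
          refine ⟨p, hp, ?_⟩
          simp only [hla, Option.getD_some] at hfp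
          rw [hla, hfp]
        -- choose representative paths
        have hchoA : ∀ x : V, ∃ p, x ∈ insert u X → p ∈ PA ∧ p.getLast? = some x := by
          intro x
          by_cases hx : x ∈ insert u X
          · obtain ⟨p, hp, hl⟩ := hsurjA x hx; exact ⟨p, fun _ => ⟨hp, hl⟩⟩
          · exact ⟨[], fun h => absurd h hx⟩
        have hchoB : ∀ x : V, ∃ p, x ∈ insert v X → p ∈ PB ∧ p.head? = some x := by
          intro x
          by_cases hx : x ∈ insert v X
          · obtain ⟨p, hp, hl⟩ := hsurjB x hx; exact ⟨p, fun _ => ⟨hp, hl⟩⟩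
          · exact ⟨[], fun h => absurd h hx⟩
        choose fA hfA using hchoA
        choose fB hfB using hchoB
        have hmeetA : ∀ p ∈ PA, ∀ w ∈ p, w ∈ insert u X → p.getLast? = some w := by
          intro p hp w hwp hwT
          obtain ⟨hq, hql⟩ := hfA w hwT
          by_cases hpq : p = fA w
          · rw [hpq]; exact hql
          · exact absurd (mem_of_getLast?' hql) (hPA_disj p hp (fA w) hq hpq w hwp)
        have hmeetB : ∀ p ∈ PB, ∀ w ∈ p, w ∈ insert v X → p.head? = some w := by
          intro p hp w hwp hwT
          obtain ⟨hq, hql⟩ := hfB w hwT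
          by_cases hpq : p = fB w
          · rw [hpq]; exact hql
          · exact absurd (mem_of_head?' hql) (hPB_disj p hp (fB w) hq hpq w hwp)
        -- the shared-vertex claim
        have hshared : ∀ p ∈ PA, ∀ q ∈ PB, ∀ w, w ∈ p → w ∈ q →
            p.getLast? = some w ∧ q.head? = some w := by
          intro p hp q hq w hwp hwq
          obtain ⟨l₁, l₂, rfl⟩ := List.append_of_mem hwp
          obtain ⟨m₁, m₂, rfl⟩ := List.append_of_mem hwq
          have hpP := (hPA_mem _ hp).1
          have hqP := (hPB_mem _ hq).1
          have hcw : Chain' (fun a b => (a, b) ∈ E') (l₁ ++ w :: m₂) := by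
            apply chain'_glue
            · exact hpP.2.2.prefix ⟨l₂, by simp⟩
            · exact hqP.2.2.suffix ⟨m₁, rfl⟩
          obtain ⟨r, hr, hrh, hrl, hrm⟩ := walk_to_path _ (by simp) hcw
          have hfr : FirstIn r A := by
            obtain ⟨a, ha, hha⟩ := (hPA_mem _ hp).2.1
            refine ⟨a, ha, ?_⟩
            rw [hrh, head?_mid l₁ w m₂, ← head?_mid l₁ w l₂]
            exact hha
          have hlr : LastIn r B := by
            obtain ⟨b, hb, hlb⟩ := (hPB_mem _ hq).2.2
            refine ⟨b, hb, ?_⟩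
            rw [hrl, getLast?_mid l₁ w m₂, ← getLast?_mid m₁ w m₂]
            exact hlb
          obtain ⟨x, hxr, hxX⟩ := hXsep r hr hfr hlr
          have hxmem := hrm x hxr
          rw [List.mem_append, List.mem_cons] at hxmem
          have hcase1 : x ∈ l₁ ∨ x = w → l₁ ++ w :: l₂ = l₁ ++ w :: l₂ →
              (l₁ ++ w :: l₂).getLast? = some w ∧ (m₁ ++ w :: m₂).head? = some w := by
            intro hx1 _
            have hxp : x ∈ l₁ ++ w :: l₂ := by
              rcases hx1 with h | h
              · simp [h]
              · simp [h]
            have hlast := hmeetA _ hp x hxp (Set.mem_insert_of_mem _ hxX)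
            have hlu := last_unique (x := x) hpP.2.1 rfl hlast (by
              rcases hx1 with h | h
              · simp [h]
              · simp [h])
            obtain ⟨rfl, rfl⟩ := hlu
            constructor
            · exact hlast
            · exact hmeetB _ hq x hwq (Set.mem_insert_of_mem _ hxX)
          rcases hxmem with hx1 | hx2 | hx3
          · exact hcase1 (Or.inl hx1) rfl
          · exact hcase1 (Or.inr hx2) rfl
          · -- x ∈ m₂
            have hxq : x ∈ m₁ ++ w :: m₂ := by simp [hx3]
            have hhead := hmeetB _ hq x hxq (Set.mem_insert_of_mem _ hxX)
            have hhu := head_unique (x := x) hqP.2.1 rfl hhead (by simp [hx3])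
            obtain ⟨rfl, rfl⟩ := hhu
            exact ⟨hmeetA _ hp x hwp (Set.mem_insert_of_mem _ hxX), hhead⟩
        -- glue the two path systems
        set glue : V → List V := fun x => if x = u then fA u ++ fB v else fA x ++ (fB x).tail
          with hglue
        have hglue_mem : ∀ x ∈ insert u X, ∀ w ∈ glue x,
            w ∈ fA x ∨ w ∈ fB (if x = u then v else x) := by
          intro x hx w hw
          by_cases hxu : x = u
          · subst hxu
            rw [hglue] at hw
            simp only [if_pos rfl] at hw ⊢
            exact List.mem_append.1 hw
          · rw [hglue] at hw
            simp only [if_neg hxu] at hw ⊢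
            rcases List.mem_append.1 hw with h | h
            · exact Or.inl h
            · exact Or.inr (List.mem_of_mem_tail h)
        have hglue_path : ∀ x ∈ insert u X,
            IsPathList (fun a b => (a, b) ∈ E) (glue x) ∧ FirstIn (glue x) A ∧
            LastIn (glue x) B := by
          intro x hx
          by_cases hxu : x = u
          · rw [hxu]
            have hx0 : u ∈ insert u X := Set.mem_insert _ _
            have hfAu := hfA u hx0
            have hfBv := hfB v (Set.mem_insert _ _)
            have hApath := (hPA_mem _ hfAu.1).1
            have hBpath := (hPB_mem _ hfBv.1).1
            have hdj : ∀ w, w ∈ fA u → w ∉ fB v := by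
              intro w hw1 hw2
              have hsh := hshared _ hfAu.1 _ hfBv.1 w hw1 hw2
              have h1 : u = w := Option.some.inj (hfAu.2.symm.trans hsh.1)
              have h2 : v = w := Option.some.inj (hfBv.2.symm.trans hsh.2)
              exact huv_eq (h1.trans h2.symm)
            have hglueu : glue u = fA u ++ fB v := by rw [hglue]; simp
            rw [hglueu]
            refine ⟨⟨?_, ?_, ?_⟩, ?_, ?_⟩
            · simp [hApath.1]
            · exact List.Nodup.append hApath.2.1 hBpath.2.1 hdj
            · unfold List.Chain'
              rw [List.isChain_append]
              refine ⟨hApath.2.2.imp (fun a b h => hmono a b h),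
                hBpath.2.2.imp (fun a b h => hmono a b h), ?_⟩
              intro a ha b hb
              rw [hfAu.2] at ha
              rw [hfBv.2] at hb
              simp at ha hb
              rw [← ha, ← hb]
              exact huv
            · obtain ⟨a, ha, hha⟩ := (hPA_mem _ hfAu.1).2.1
              exact ⟨a, ha, by rw [List.head?_append_of_ne_nil _ hApath.1]; exact hha⟩
            · obtain ⟨b, hb, hlb⟩ := (hPB_mem _ hfBv.1).2.2
              exact ⟨b, hb, by rw [List.getLast?_append, hlb]; rfl⟩
          · have hxX := (Set.mem_insert_iff.1 hx).resolve_left hxu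
            have hfAx := hfA x hx
            have hfBx := hfB x (Set.mem_insert_of_mem _ hxX)
            have hApath := (hPA_mem _ hfAx.1).1
            have hBpath := (hPB_mem _ hfBx.1).1
            have hcons : fB x = x :: (fB x).tail := eq_cons_of_head? hfBx.2
            have hndB := hBpath.2.1
            rw [hcons] at hndB
            have hndB' := List.nodup_cons.1 hndB
            have hdj : ∀ w, w ∈ fA x → w ∉ (fB x).tail := by
              intro w hw1 hw2
              have hw2' : w ∈ fB x := List.mem_of_mem_tail hw2
              have hsh := hshared _ hfAx.1 _ hfBx.1 w hw1 hw2'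
              have h2 : x = w := Option.some.inj (hfBx.2.symm.trans hsh.2)
              exact hndB'.1 (h2 ▸ hw2)
            have hglueq : glue x = fA x ++ (fB x).tail := by rw [hglue]; simp [hxu]
            rw [hglueq]
            refine ⟨⟨?_, ?_, ?_⟩, ?_, ?_⟩
            · simp [hApath.1]
            · exact List.Nodup.append hApath.2.1 hndB'.2 hdj
            · unfold List.Chain'
              rw [List.isChain_append]
              refine ⟨hApath.2.2.imp (fun a b h => hmono a b h),
                (hBpath.2.2.tail).imp (fun a b h => hmono a b h), ?_⟩
              intro a ha b hb
              rw [hfAx.2] at ha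
              simp at ha
              have hch := hBpath.2.2
              unfold List.Chain' at hch
              rw [hcons, List.isChain_cons] at hch
              rw [← ha]
              exact hmono _ _ (hch.1 b hb)
            · obtain ⟨a, ha, hha⟩ := (hPA_mem _ hfAx.1).2.1
              exact ⟨a, ha, by rw [List.head?_append_of_ne_nil _ hApath.1]; exact hha⟩
            · obtain ⟨b, hb, hlb⟩ := (hPB_mem _ hfBx.1).2.2
              cases htail : (fB x).tail with
              | nil =>
                have hfBsing : fB x = [x] := by rw [hcons, htail]
                rw [hfBsing] at hlb
                simp at hlb
                refine ⟨b, hb, ?_⟩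
                simp only [List.append_nil]
                rw [hfAx.2, hlb]
              | cons c t =>
                refine ⟨b, hb, ?_⟩
                rw [List.getLast?_append]
                rw [hcons, htail, List.getLast?_cons_cons] at hlb
                rw [hlb]
                rfl
        have hdisj : ∀ x ∈ insert u X, ∀ y ∈ insert u X, x ≠ y →
            ListsDisjoint (glue x) (glue y) := by
          intro x hx y hy hxy w hwx hwy
          have hx'T : (if x = u then v else x) ∈ insert v X := by
            by_cases h : x = u
            · simp [h]
            · simp [h]
              exact Set.mem_insert_of_mem _ ((Set.mem_insert_iff.1 hx).resolve_left h)
          have hy'T : (if y = u then v else y) ∈ insert v X := by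
            by_cases h : y = u
            · simp [h]
            · simp [h]
              exact Set.mem_insert_of_mem _ ((Set.mem_insert_iff.1 hy).resolve_left h)
          have hfAx := hfA x hx
          have hfAy := hfA y hy
          have hfBx := hfB _ hx'T
          have hfBy := hfB _ hy'T
          have hx'ne : (if x = u then v else x) ≠ (if y = u then v else y) := by
            by_cases hxu : x = u <;> by_cases hyu : y = u
            · exact absurd (hxu.trans hyu.symm) hxy
            · simp only [if_pos hxu, if_neg hyu]
              intro h
              exact hvnotX (h ▸ (Set.mem_insert_iff.1 hy).resolve_left hyu)
            · simp only [if_neg hxu, if_pos hyu]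
              intro h
              exact hvnotX (h ▸ (Set.mem_insert_iff.1 hx).resolve_left hxu)
            · simpa [if_neg hxu, if_neg hyu] using hxy
          have hvne : ∀ z ∈ insert u X, z ≠ v := by
            intro z hz h
            rcases Set.mem_insert_iff.1 hz with h' | h'
            · exact huv_eq (h ▸ h').symm
            · exact hvnotX (h ▸ h')
          have hmix : ∀ a ∈ insert u X, ∀ b ∈ insert u X, a ≠ b →
              w ∈ fA a → w ∈ fB (if b = u then v else b) → False := by
            intro a ha b hb hab hwa hwb
            have hb'T : (if b = u then v else b) ∈ insert v X := by
              by_cases h : b = u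
              · simp [h]
              · simp only [if_neg h]
                exact Set.mem_insert_of_mem _ ((Set.mem_insert_iff.1 hb).resolve_left h)
            have hsh := hshared _ (hfA a ha).1 _ (hfB _ hb'T).1 w hwa hwb
            have h1 : a = w := Option.some.inj ((hfA a ha).2.symm.trans hsh.1)
            have h2 : (if b = u then v else b) = w :=
              Option.some.inj ((hfB _ hb'T).2.symm.trans hsh.2)
            by_cases hbu : b = u
            · rw [if_pos hbu] at h2
              exact hvne a ha (h1.trans h2.symm)
            · rw [if_neg hbu] at h2
              exact hab (h1.trans h2.symm)
          obtain h1 | h1 := hglue_mem x hx w hwx <;> obtain h2 | h2 := hglue_mem y hy w hwy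
          · -- both in fA parts
            have hne : fA x ≠ fA y := by
              intro h
              exact hxy (Option.some.inj (hfAx.2.symm.trans (h ▸ hfAy.2)))
            exact hPA_disj _ hfAx.1 _ hfAy.1 hne w h1 h2
          · exact hmix x hx y hy hxy h1 h2
          · exact hmix y hy x hx hxy.symm h2 h1
          · -- both in fB parts
            have hne : fB (if x = u then v else x) ≠ fB (if y = u then v else y) := by
              intro h
              exact hx'ne (Option.some.inj (hfBx.2.symm.trans (h ▸ hfBy.2)))
            exact hPB_disj _ hfBx.1 _ hfBy.1 hne w h1 h2
        -- final assembly
        have hglue_ne : ∀ x ∈ insert u X, glue x ≠ [] := fun x hx => (hglue_path x hx).1.1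
        refine ⟨(Set.toFinite (insert u X)).toFinset.image glue, ?_, ?_, ?_⟩
        · rw [Finset.card_image_of_injOn, ← Set.ncard_eq_toFinset_card _ (Set.toFinite _),
            hTcard]
          intro x hx y hy heq
          simp only [Finset.mem_coe, Set.Finite.mem_toFinset] at hx hy
          by_contra hne
          obtain ⟨w, hw⟩ := List.exists_mem_of_ne_nil _ (hglue_ne x hx)
          exact hdisj x hx y hy hne w hw (heq ▸ hw)
        · intro p hp
          obtain ⟨x, hxT, rfl⟩ := Finset.mem_image.1 hp
          rw [Set.Finite.mem_toFinset] at hxT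
          exact hglue_path x hxT
        · intro p hp q hq hne
          obtain ⟨x, hxT, rfl⟩ := Finset.mem_image.1 hp
          obtain ⟨y, hyT, rfl⟩ := Finset.mem_image.1 hq
          rw [Set.Finite.mem_toFinset] at hxT hyT
          exact hdisj x hxT y hyT (fun h => hne (h ▸ rfl))

end Menger

lemma dpaths_card_le {V : Type*} [Fintype V] {ℓ : ℕ}
    (G : Fin ℓ → V → V → Prop) (S : Fin ℓ → Set V) (B : Set V)
    {P : Finset (Fin ℓ × List V)} (hP : DPathSys G S B P)
    {B' : Set V} (hB' : B' ⊆ B) {X : Fin ℓ → Set V}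
    (hX : ∀ i, IsSeparator (G i) (S i) B' (X i)) :
    P.card ≤ (B \ B').ncard + ∑ i : Fin ℓ, (X i).ncard := by
  classical
  rcases P.eq_empty_or_nonempty with rfl | ⟨q₀, hq₀⟩
  · simp
  obtain ⟨v₀, -⟩ := List.exists_mem_of_ne_nil _ (hP.1.1 q₀ hq₀).1.1
  set lastv : Fin ℓ × List V → V := fun q => q.2.getLast?.getD v₀ with hlastv
  have hlast : ∀ q ∈ P, q.2.getLast? = some (lastv q) ∧ lastv q ∈ B := by
    intro q hq
    obtain ⟨b, hb, hlb⟩ := hP.2.1 q hq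
    constructor
    · rw [hlb]; simp [hlastv, hlb]
    · simp [hlastv, hlb]; exact hb
  have hhit : ∀ q : Fin ℓ × List V, ∃ x, q ∈ P → lastv q ∈ B' → x ∈ q.2 ∧ x ∈ X q.1 := by
    intro q
    by_cases hq : q ∈ P ∧ lastv q ∈ B'
    · obtain ⟨x, hx1, hx2⟩ := hX q.1 q.2 (hP.1.1 q hq.1).1 (hP.1.1 q hq.1).2
        ⟨lastv q, hq.2, (hlast q hq.1).1⟩
      exact ⟨x, fun _ _ => ⟨hx1, hx2⟩⟩
    · exact ⟨v₀, fun h1 h2 => absurd ⟨h1, h2⟩ hq⟩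
  choose hit hhit using hhit
  set φ : Fin ℓ × List V → V ⊕ (Fin ℓ × V) := fun q =>
    if lastv q ∈ B' then Sum.inr (q.1, hit q) else Sum.inl (lastv q) with hφ
  set Tf : Finset (V ⊕ (Fin ℓ × V)) :=
    ((B \ B').toFinite.toFinset).image Sum.inl ∪
      Finset.univ.biUnion (fun i => ((X i).toFinite.toFinset).image (fun x => Sum.inr (i, x)))
    with hTf
  have hmaps : ∀ q ∈ P, φ q ∈ Tf := by
    intro q hq
    by_cases hb : lastv q ∈ B'
    · have hh := hhit q hq hb
      simp only [hφ, if_pos hb, hTf]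
      apply Finset.mem_union_right
      refine Finset.mem_biUnion.2 ⟨q.1, Finset.mem_univ _, ?_⟩
      exact Finset.mem_image.2 ⟨hit q, (Set.Finite.mem_toFinset _).2 hh.2, rfl⟩
    · simp only [hφ, if_neg hb, hTf]
      apply Finset.mem_union_left
      exact Finset.mem_image.2 ⟨lastv q, (Set.Finite.mem_toFinset _).2 ⟨(hlast q hq).2, hb⟩, rfl⟩
  have hinj : Set.InjOn φ ↑P := by
    intro q hq q' hq' heq
    rw [Finset.mem_coe] at hq hq'
    by_contra hne
    by_cases hb : lastv q ∈ B' <;> by_cases hb' : lastv q' ∈ B' <;>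
      simp only [hφ, if_pos, if_neg, hb, hb', if_true, if_false] at heq
    · simp only [Sum.inr.injEq, Prod.mk.injEq] at heq
      exact hP.1.2 q hq q' hq' hne heq.1 (hit q) (hhit q hq hb).1
        (heq.2 ▸ (hhit q' hq' hb').1)
    · simp at heq
    · simp at heq
    · simp only [Sum.inl.injEq] at heq
      refine hP.2.2 q hq q' hq' hne ?_
      rw [(hlast q hq).1, (hlast q' hq').1, heq]
  calc P.card ≤ Tf.card := Finset.card_le_card_of_injOn φ hmaps hinj
    _ ≤ (((B \ B').toFinite.toFinset).image Sum.inl).card +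
        (Finset.univ.biUnion
          (fun i => ((X i).toFinite.toFinset).image (fun x => Sum.inr (i, x)))).card :=
      Finset.card_union_le _ _
    _ ≤ (B \ B').ncard + ∑ i : Fin ℓ, (X i).ncard := by
      refine add_le_add ?_ ?_
      · rw [Finset.card_image_of_injective _ Sum.inl_injective,
          ← Set.ncard_eq_toFinset_card _ (Set.toFinite _)]
      · refine le_trans (Finset.card_biUnion_le) (Finset.sum_le_sum fun i _ => ?_)
        refine le_trans Finset.card_image_le ?_
        rw [← Set.ncard_eq_toFinset_card _ (Set.toFinite _)]

def Ghat {V : Type*} {ℓ : ℕ} (G : Fin ℓ → V → V → Prop) (B : Set V) :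
    ((Fin ℓ × V) ⊕ V) → ((Fin ℓ × V) ⊕ V) → Prop
  | Sum.inl p, Sum.inl q => p.1 = q.1 ∧ G p.1 p.2 q.2
  | Sum.inl p, Sum.inr b => p.2 = b ∧ b ∈ B
  | _, _ => False

lemma ghat_path_structure {V : Type*} {ℓ : ℕ} (G : Fin ℓ → V → V → Prop) (B : Set V) :
    ∀ (l : List ((Fin ℓ × V) ⊕ V)), l.Chain' (Ghat G B) → ∀ (i : Fin ℓ) (x : V),
      l.head? = some (Sum.inl (i, x)) → (∃ b, l.getLast? = some (Sum.inr b)) →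
      ∃ (p : List V) (b : V), p ≠ [] ∧ p.head? = some x ∧ p.getLast? = some b ∧ b ∈ B ∧
        p.Chain' (G i) ∧ l = p.map (fun a => Sum.inl (i, a)) ++ [Sum.inr b] := by
  intro l
  induction l with
  | nil => intro _ i x hh _; simp at hh
  | cons w t ih =>
    intro hc i x hh hlast
    simp only [List.head?_cons, Option.some.injEq] at hh
    subst hh
    cases t with
    | nil =>
      obtain ⟨b, hb⟩ := hlast
      simp at hb
    | cons w' t' =>
      unfold List.Chain' at hc
      rw [List.isChain_cons_cons] at hc
      cases w' with
      | inl jy =>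
        obtain ⟨j, y⟩ := jy
        obtain ⟨hj, hG⟩ := hc.1
        simp only at hj
        subst hj
        obtain ⟨b', hlast'⟩ := hlast
        rw [List.getLast?_cons_cons] at hlast'
        obtain ⟨p, b, hne, hph, hpl, hbB, hpc, hleq⟩ := ih hc.2 i y rfl ⟨b', hlast'⟩
        refine ⟨x :: p, b, by simp, by simp, ?_, hbB, ?_, ?_⟩
        · rw [eq_cons_of_head? hph] at hpl ⊢
          rw [List.getLast?_cons_cons]
          exact hpl
        · rw [eq_cons_of_head? hph] at hpc ⊢
          exact List.isChain_cons_cons.2 ⟨hG, hpc⟩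
        · simp only [List.map_cons, List.cons_append]
          rw [hleq]
      | inr c =>
        obtain ⟨hxc, hcB⟩ := hc.1
        simp only at hxc
        subst hxc
        cases t' with
        | cons w'' t'' => exact absurd (List.isChain_cons_cons.1 hc.2).1 (by cases w'' <;> exact id)
        | nil =>
          exact ⟨[x], x, by simp, by simp, by simp, hcB, List.isChain_singleton _, by simp⟩

/-- Min-max duality for D-paths and D-cuts: the maximum size of a set of
D-paths w.r.t. `(ℱ,𝒮)` and `B` equals the minimum order of a D-cut, i.e.
`min over B' ⊆ B of (|B \ B'| + Σ_i x_i(B'))`, where `x_i(B')` is the minimum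
size of an `(S_i, B')`-separator in `G_i`. -/
theorem dpaths_min_max {V : Type*} [Fintype V] {ℓ : ℕ}
    (G : Fin ℓ → V → V → Prop) (S : Fin ℓ → Set V) (B : Set V) :
    sSup {n : ℕ | ∃ P : Finset (Fin ℓ × List V), DPathSys G S B P ∧ P.card = n} =
    sInf {n : ℕ | ∃ B' ⊆ B, ∃ X : Fin ℓ → Set V,
      (∀ i, IsSeparator (G i) (S i) B' (X i)) ∧
      n = (B \ B').ncard + ∑ i : Fin ℓ, (X i).ncard} := by
  classical
  set L := {n : ℕ | ∃ P : Finset (Fin ℓ × List V), DPathSys G S B P ∧ P.card = n} with hL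
  set Rs := {n : ℕ | ∃ B' ⊆ B, ∃ X : Fin ℓ → Set V,
      (∀ i, IsSeparator (G i) (S i) B' (X i)) ∧
      n = (B \ B').ncard + ∑ i : Fin ℓ, (X i).ncard} with hRs
  have hRne : Rs.Nonempty := by
    refine ⟨B.ncard, ∅, Set.empty_subset _, fun _ => ∅, ?_, ?_⟩
    · intro i p hp hf hl
      obtain ⟨a, ha, -⟩ := hl
      exact absurd ha (Set.notMem_empty a)
    · simp
  have hmmem := Nat.sInf_mem hRne
  set m := sInf Rs with hm
  obtain ⟨B₀, hB₀, X₀, hX₀, hmeq⟩ := hmmem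
  have hub : ∀ n ∈ L, n ≤ m := by
    rintro n ⟨P, hP, rfl⟩
    exact le_of_le_of_eq (dpaths_card_le G S B hP hB₀ hX₀) hmeq.symm
  have h0L : (0 : ℕ) ∈ L := by
    refine ⟨∅, ⟨⟨?_, ?_⟩, ?_, ?_⟩, Finset.card_empty⟩ <;>
      exact fun q hq => absurd hq (Finset.notMem_empty q)
  -- the hard direction : m is attained by a D-path system
  have hmL : m ∈ L := by
    letI : DecidableEq ((Fin ℓ × V) ⊕ V) := Classical.decEq _
    set Eh : Finset (((Fin ℓ × V) ⊕ V) × ((Fin ℓ × V) ⊕ V)) :=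
      (Set.toFinite {e : ((Fin ℓ × V) ⊕ V) × ((Fin ℓ × V) ⊕ V) |
        Ghat G B e.1 e.2}).toFinset with hEh
    have hEmem : ∀ a b : (Fin ℓ × V) ⊕ V, ((a, b) ∈ Eh) ↔ Ghat G B a b := by
      intro a b; rw [hEh, Set.Finite.mem_toFinset]; exact Iff.rfl
    set A' : Set ((Fin ℓ × V) ⊕ V) := {w | ∃ i a, a ∈ S i ∧ w = Sum.inl (i, a)} with hA'
    set Bh : Set ((Fin ℓ × V) ⊕ V) := Sum.inr '' B with hBh
    have hsepW : ∀ Y : Set ((Fin ℓ × V) ⊕ V),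
        IsSeparator (fun a b => (a, b) ∈ Eh) A' Bh Y → m ≤ Y.ncard := by
      intro Y hY
      set B'' : Set V := {b | b ∈ B ∧ Sum.inr b ∉ Y} with hB''
      set X' : Fin ℓ → Set V := fun i => {x | Sum.inl (i, x) ∈ Y} with hX'
      have hsep'' : ∀ i, IsSeparator (G i) (S i) B'' (X' i) := by
        intro i p hp hf hl
        obtain ⟨b, hbB'', hlb⟩ := hl
        obtain ⟨a, haS, hha⟩ := hf
        have hmapne : p.map (fun z => Sum.inl (i, z) : V → (Fin ℓ × V) ⊕ V) ≠ [] := by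
          simp [hp.1]
        have hpath : IsPathList (fun a b : (Fin ℓ × V) ⊕ V => (a, b) ∈ Eh)
            (p.map (fun z => Sum.inl (i, z)) ++ [Sum.inr b]) := by
          refine ⟨by simp, ?_, ?_⟩
          · refine List.Nodup.append ?_ (by simp) ?_
            · exact hp.2.1.map (fun a b hab => by simpa using hab)
            · intro w hw1 hw2
              simp at hw2
              obtain ⟨x, -, rfl⟩ := List.mem_map.1 hw1
              simp at hw2
          · unfold List.Chain'
            rw [List.isChain_append]
            refine ⟨?_, by simp, ?_⟩
            · rw [List.isChain_map]
              refine hp.2.2.imp ?_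
              intro a b hab
              rw [hEmem]
              exact ⟨rfl, hab⟩
            · intro z hz w hw
              simp only [List.head?_cons, Option.mem_def, Option.some.injEq] at hw
              rw [List.getLast?_map, hlb] at hz
              simp only [Option.mem_def, Option.map_some, Option.some.injEq] at hz
              rw [← hw, ← hz]
              rw [hEmem]
              exact ⟨rfl, hbB''.1⟩
        have hfW : FirstIn (p.map (fun z => Sum.inl (i, z)) ++ [Sum.inr b]) A' := by
          refine ⟨Sum.inl (i, a), ⟨i, a, haS, rfl⟩, ?_⟩
          rw [List.head?_append_of_ne_nil _ hmapne, List.head?_map, hha]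
          rfl
        have hlW : LastIn (p.map (fun z => Sum.inl (i, z)) ++ [Sum.inr b]) Bh :=
          ⟨Sum.inr b, ⟨b, hbB''.1, rfl⟩, by simp⟩
        obtain ⟨w, hwph, hwY⟩ := hY _ hpath hfW hlW
        rw [List.mem_append] at hwph
        rcases hwph with hw | hw
        · obtain ⟨x, hxp, rfl⟩ := List.mem_map.1 hw
          exact ⟨x, hxp, hwY⟩
        · simp at hw
          rw [hw] at hwY
          exact absurd hwY hbB''.2
      have hmemRs : ((B \ B'').ncard + ∑ i : Fin ℓ, (X' i).ncard) ∈ Rs :=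
        ⟨B'', fun b hb => hb.1, X', hsep'', rfl⟩
      refine le_trans (Nat.sInf_le hmemRs) ?_
      have hdisj1 : Disjoint (((B \ B'').toFinite.toFinset).image
          (Sum.inr : V → (Fin ℓ × V) ⊕ V))
          (Finset.univ.biUnion (fun i => ((X' i).toFinite.toFinset).image
            (fun x => (Sum.inl (i, x) : (Fin ℓ × V) ⊕ V)))) := by
        rw [Finset.disjoint_left]
        intro w hw1 hw2
        obtain ⟨b, -, rfl⟩ := Finset.mem_image.1 hw1
        obtain ⟨i, -, hw2⟩ := Finset.mem_biUnion.1 hw2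
        obtain ⟨x, -, heq⟩ := Finset.mem_image.1 hw2
        simp at heq
      have hpd : ∀ i ∈ Finset.univ, ∀ j ∈ (Finset.univ : Finset (Fin ℓ)), i ≠ j →
          Disjoint (((X' i).toFinite.toFinset).image
            (fun x => (Sum.inl (i, x) : (Fin ℓ × V) ⊕ V)))
            (((X' j).toFinite.toFinset).image (fun x => Sum.inl (j, x))) := by
        intro i _ j _ hij
        rw [Finset.disjoint_left]
        intro w hw1 hw2
        obtain ⟨x, -, rfl⟩ := Finset.mem_image.1 hw1
        obtain ⟨x', -, heq⟩ := Finset.mem_image.1 hw2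
        simp only [Sum.inl.injEq, Prod.mk.injEq] at heq
        exact hij heq.1.symm
      have hFsub : (((B \ B'').toFinite.toFinset).image (Sum.inr : V → (Fin ℓ × V) ⊕ V) ∪
          Finset.univ.biUnion (fun i => ((X' i).toFinite.toFinset).image
            (fun x => (Sum.inl (i, x) : (Fin ℓ × V) ⊕ V)))) ⊆ (Set.toFinite Y).toFinset := by
        intro w hw
        rw [Set.Finite.mem_toFinset]
        rw [Finset.mem_union] at hw
        rcases hw with hw | hw
        · obtain ⟨b, hb, rfl⟩ := Finset.mem_image.1 hw
          rw [Set.Finite.mem_toFinset] at hb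
          by_contra hnot
          exact hb.2 ⟨hb.1, hnot⟩
        · obtain ⟨i, -, hw⟩ := Finset.mem_biUnion.1 hw
          obtain ⟨x, hx, rfl⟩ := Finset.mem_image.1 hw
          rw [Set.Finite.mem_toFinset] at hx
          exact hx
      have hFcard : (((B \ B'').toFinite.toFinset).image (Sum.inr : V → (Fin ℓ × V) ⊕ V) ∪
          Finset.univ.biUnion (fun i => ((X' i).toFinite.toFinset).image
            (fun x => (Sum.inl (i, x) : (Fin ℓ × V) ⊕ V)))).card =
          (B \ B'').ncard + ∑ i : Fin ℓ, (X' i).ncard := by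
        rw [Finset.card_union_of_disjoint hdisj1, Finset.card_biUnion hpd]
        congr 1
        · rw [Finset.card_image_of_injective _ Sum.inr_injective,
            ← Set.ncard_eq_toFinset_card _ (Set.toFinite _)]
        · refine Finset.sum_congr rfl fun i _ => ?_
          rw [Finset.card_image_of_injective _ (fun a b h => by simpa using h),
            ← Set.ncard_eq_toFinset_card _ (Set.toFinite _)]
      rw [← hFcard, Set.ncard_eq_toFinset_card _ (Set.toFinite Y)]
      exact Finset.card_le_card hFsub
    obtain ⟨Ph, hPh_card, hPh_mem, hPh_disj⟩ := menger_core Eh A' Bh m hsepW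
    have hconv : ∀ x : {l // l ∈ Ph}, ∃ ip : Fin ℓ × List V,
        IsPathList (G ip.1) ip.2 ∧ FirstIn ip.2 (S ip.1) ∧ LastIn ip.2 B ∧
        ∃ b, ip.2.getLast? = some b ∧
          x.1 = ip.2.map (fun a => Sum.inl (ip.1, a)) ++ [Sum.inr b] := by
      rintro ⟨l, hl⟩
      obtain ⟨hpath, hf, hlst⟩ := hPh_mem l hl
      obtain ⟨w, hwA, hwh⟩ := hf
      obtain ⟨i, a, haS, rfl⟩ := hwA
      obtain ⟨w', hw'B, hw'l⟩ := hlst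
      obtain ⟨b', hb'B, rfl⟩ := hw'B
      have hchain : l.Chain' (Ghat G B) :=
        List.IsChain.imp (fun a b h => (hEmem a b).1 h) hpath.2.2
      obtain ⟨p, b, hne, hph, hpl, hbB, hpc, hleq⟩ :=
        ghat_path_structure G B l hchain i a hwh ⟨b', hw'l⟩
      refine ⟨(i, p), ⟨hne, ?_, hpc⟩, ⟨a, haS, hph⟩, ⟨b, hbB, hpl⟩, b, hpl, hleq⟩
      have hnd := hpath.2.1
      rw [hleq] at hnd
      exact List.Nodup.of_map _ ((List.nodup_append.1 hnd).1)
    choose Φ hΦ using hconv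
    have hΦinj : Set.InjOn Φ ↑Ph.attach := by
      intro x _ y _ heq
      obtain ⟨-, -, -, b, hb, hleq⟩ := hΦ x
      obtain ⟨-, -, -, b', hb', hleq'⟩ := hΦ y
      have hbb : b = b' := by
        rw [heq] at hb
        rw [hb] at hb'
        exact Option.some.inj hb'
      refine Subtype.ext ?_
      rw [hleq, hleq', heq, hbb]
    refine ⟨Ph.attach.image Φ, ⟨⟨?_, ?_⟩, ?_, ?_⟩, ?_⟩
    · intro q hq
      obtain ⟨x, -, rfl⟩ := Finset.mem_image.1 hq
      exact ⟨(hΦ x).1, (hΦ x).2.1⟩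
    · intro q hq q' hq' hne hi w hw hw'
      obtain ⟨x, -, rfl⟩ := Finset.mem_image.1 hq
      obtain ⟨y, -, rfl⟩ := Finset.mem_image.1 hq'
      obtain ⟨-, -, -, b, hb, hleq⟩ := hΦ x
      obtain ⟨-, -, -, b', hb', hleq'⟩ := hΦ y
      have hxy : x.1 ≠ y.1 := by
        intro h
        exact hne (congrArg Φ (Subtype.ext h))
      refine hPh_disj x.1 x.2 y.1 y.2 hxy (Sum.inl ((Φ x).1, w)) ?_ ?_
      · rw [hleq]
        exact List.mem_append_left _ (List.mem_map.2 ⟨w, hw, rfl⟩)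
      · rw [hleq']
        refine List.mem_append_left _ (List.mem_map.2 ⟨w, hw', ?_⟩)
        rw [hi]
    · intro q hq
      obtain ⟨x, -, rfl⟩ := Finset.mem_image.1 hq
      exact (hΦ x).2.2.1
    · intro q hq q' hq' hne heq
      obtain ⟨x, -, rfl⟩ := Finset.mem_image.1 hq
      obtain ⟨y, -, rfl⟩ := Finset.mem_image.1 hq'
      obtain ⟨-, -, -, b, hb, hleq⟩ := hΦ x
      obtain ⟨-, -, -, b', hb', hleq'⟩ := hΦ y
      have hxy : x.1 ≠ y.1 := by
        intro h
        exact hne (congrArg Φ (Subtype.ext h))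
      have hbb : b = b' := by
        rw [hb, hb'] at heq
        exact Option.some.inj heq
      refine hPh_disj x.1 x.2 y.1 y.2 hxy (Sum.inr b) ?_ ?_
      · rw [hleq]
        exact List.mem_append_right _ (by simp)
      · rw [hleq', hbb]
        exact List.mem_append_right _ (by simp)
    · rw [Finset.card_image_of_injOn hΦinj, Finset.card_attach, hPh_card]
  exact le_antisymm (csSup_le ⟨0, h0L⟩ hub) (le_csSup ⟨m, hub⟩ hmL)
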